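/- Let k, l be positive integers with k > l, L = 2π√((k² + kl + l²)/3), p = (2k + l)(k - l)(2l + k)/(3√3 (k² + kl + l²)^{3/2}), and define η₁ = -(2πi/(3L))(2k + l), η₂ = η₁ + (2πi/L)k, η₃ = η₂ + (2πi/L)l. Set Γ = Σ_{j=1}^{3} (η_{j+1} - η_j) η_{j+2}² and Λ = ip Σ_{j=1}^{3} (η_{j+1} - η_j)/η_{j+2}. Then Γ = Λ = -(8π³/L³) i k l (k + l). -/

import Mathlib

theorem stmt_5 (k l : ℕ) (hl : 0 < l) (hkl : l < k)
    (L p : ℝ)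
    (hL : L = 2 * Real.pi * Real.sqrt (((k:ℝ)^2 + k*l + l^2)/3))
    (hp : p = ((2*(k:ℝ) + l) * ((k:ℝ) - l) * (2*(l:ℝ) + k)) /
      (3 * Real.sqrt 3 * (((k:ℝ)^2 + k*l + l^2)) ^ ((3:ℝ)/2)))
    (η₁ η₂ η₃ Γ Λ : ℂ)
    (h1 : η₁ = -(2 * Real.pi * Complex.I / (3 * L)) * (2*(k:ℂ) + l))
    (h2 : η₂ = η₁ + (2 * Real.pi * Complex.I / L) * k)
    (h3 : η₃ = η₂ + (2 * Real.pi * Complex.I / L) * l)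
    (hΓ : Γ = (η₂ - η₁) * η₃^2 + (η₃ - η₂) * η₁^2 + (η₁ - η₃) * η₂^2)
    (hΛ : Λ = Complex.I * p * ((η₂ - η₁) / η₃ + (η₃ - η₂) / η₁ + (η₁ - η₃) / η₂)) :
    Γ = -(8 * Real.pi^3 / L^3) * Complex.I * k * l * (k + l) ∧
    Λ = -(8 * Real.pi^3 / L^3) * Complex.I * k * l * (k + l) := by
  have hk : 0 < k := lt_trans hl hkl
  have hkR : (0:ℝ) < k := by exact_mod_cast hk
  have hlR : (0:ℝ) < l := by exact_mod_cast hl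
  have hklR : (l:ℝ) < k := by exact_mod_cast hkl
  have hQpos : (0:ℝ) < (k:ℝ)^2 + k*l + l^2 := by positivity
  have hs : 0 < Real.sqrt ((k:ℝ)^2 + k*l + l^2) := Real.sqrt_pos.mpr hQpos
  have ht : 0 < Real.sqrt 3 := by positivity
  have htq : Real.sqrt 3 ^ 2 = 3 := Real.sq_sqrt (by norm_num)
  have hdiv : Real.sqrt (((k:ℝ)^2 + k*l + l^2)/3)
      = Real.sqrt ((k:ℝ)^2 + k*l + l^2) / Real.sqrt 3 := Real.sqrt_div hQpos.le 3
  have hr : ((k:ℝ)^2 + k*l + l^2) ^ ((3:ℝ)/2) = Real.sqrt ((k:ℝ)^2 + k*l + l^2) ^ 3 := by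
    rw [Real.sqrt_eq_rpow, ← Real.rpow_natCast (((k:ℝ)^2 + k*l + l^2) ^ ((1:ℝ)/2)) 3,
      ← Real.rpow_mul hQpos.le]
    norm_num
  have hLpos : 0 < L := by rw [hL, hdiv]; positivity
  have hL0 : L ≠ 0 := hLpos.ne'
  -- key real identity
  have key : p * L ^ 3 =
      8 * Real.pi ^ 3 * ((2*(k:ℝ) + l) * ((k:ℝ) - l) * (2*(l:ℝ) + k)) / 27 := by
    rw [hp, hL, hdiv, hr]
    field_simp
    ring_nf
    linear_combination (-24*((k:ℝ)-l)*(Real.sqrt 3^2+3)) * htq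
  have hpval : p = 8 * Real.pi ^ 3 * ((2*(k:ℝ) + l) * ((k:ℝ) - l) * (2*(l:ℝ) + k)) /
      (27 * L ^ 3) := by
    field_simp
    linarith [key]
  -- complex prerequisites
  have hLC : (L:ℂ) ≠ 0 := by exact_mod_cast hL0
  have hpC : (p:ℂ) = 8 * (Real.pi:ℂ) ^ 3 * ((2*(k:ℂ) + l) * ((k:ℂ) - l) * (2*(l:ℂ) + k)) /
      (27 * (L:ℂ) ^ 3) := by
    rw [hpval]; push_cast; ring
  have hpiC : (Real.pi : ℂ) ≠ 0 := by exact_mod_cast Real.pi_ne_zero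
  have hIn : Complex.I ≠ 0 := Complex.I_ne_zero
  have ha1 : (2*(k:ℂ) + l) ≠ 0 := by
    have h' : ((2*(k:ℝ) + l : ℝ) : ℂ) ≠ 0 := by
      exact_mod_cast (by positivity : (2*(k:ℝ)+l) ≠ 0)
    intro h; apply h'; push_cast; linear_combination h
  have ha2 : ((k:ℂ) - l) ≠ 0 := by
    have h' : (((k:ℝ) - l : ℝ) : ℂ) ≠ 0 := by
      exact_mod_cast ne_of_gt (by linarith : (0:ℝ) < (k:ℝ) - l)
    intro h; apply h'; push_cast; linear_combination h
  have ha3 : ((k:ℂ) + 2*l) ≠ 0 := by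
    have h' : (((k:ℝ) + 2*l : ℝ) : ℂ) ≠ 0 := by
      exact_mod_cast (by positivity : ((k:ℝ)+2*l) ≠ 0)
    intro h; apply h'; push_cast; linear_combination h
  have e1 : η₁ = Complex.I * (2 * (Real.pi:ℂ) / L) * (-(2*(k:ℂ) + l)/3) := by
    rw [h1]; ring
  have e2 : η₂ = Complex.I * (2 * (Real.pi:ℂ) / L) * (((k:ℂ) - l)/3) := by
    rw [h2, h1]; ring
  have e3 : η₃ = Complex.I * (2 * (Real.pi:ℂ) / L) * (((k:ℂ) + 2*l)/3) := by
    rw [h3, h2, h1]; ring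
  have hc : Complex.I * (2 * (Real.pi:ℂ) / L) ≠ 0 :=
    mul_ne_zero hIn (div_ne_zero (mul_ne_zero two_ne_zero hpiC) hLC)
  have r1 : (η₂ - η₁) / η₃ = 3*(k:ℂ)/((k:ℂ)+2*l) := by
    rw [e1, e2, e3, show Complex.I * (2 * (Real.pi:ℂ) / L) * (((k:ℂ) - l)/3)
      - Complex.I * (2 * (Real.pi:ℂ) / L) * (-(2*(k:ℂ) + l)/3)
      = Complex.I * (2 * (Real.pi:ℂ) / L) * ((k:ℂ)) by ring,
      mul_div_mul_left _ _ hc, div_div_eq_mul_div]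
    ring
  have r2 : (η₃ - η₂) / η₁ = -(3*(l:ℂ))/(2*(k:ℂ)+l) := by
    rw [e1, e2, e3, show Complex.I * (2 * (Real.pi:ℂ) / L) * (((k:ℂ) + 2*l)/3)
      - Complex.I * (2 * (Real.pi:ℂ) / L) * (((k:ℂ) - l)/3)
      = Complex.I * (2 * (Real.pi:ℂ) / L) * ((l:ℂ)) by ring,
      mul_div_mul_left _ _ hc, div_div_eq_mul_div, div_neg]
    ring
  have r3 : (η₁ - η₃) / η₂ = -(3*((k:ℂ)+l))/((k:ℂ)-l) := by
    rw [e1, e2, e3, show Complex.I * (2 * (Real.pi:ℂ) / L) * (-(2*(k:ℂ) + l)/3)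
      - Complex.I * (2 * (Real.pi:ℂ) / L) * (((k:ℂ) + 2*l)/3)
      = Complex.I * (2 * (Real.pi:ℂ) / L) * (-((k:ℂ)+l)) by ring,
      mul_div_mul_left _ _ hc, div_div_eq_mul_div]
    ring
  constructor
  · rw [hΓ, e1, e2, e3]
    field_simp
    linear_combination (216*(k:ℂ)*(l:ℂ)*((k:ℂ)+(l:ℂ)))
      * Complex.I_sq
  · rw [hΛ, r1, r2, r3, hpC]
    field_simp
    ring
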